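/- Let n ≥ 2 be an integer and set M = 2·n²·(n+1)·C(3n−1, n). Let F(t) ∈ (ℂ[x])[t] be a monic polynomial of degree n in the variable t with coefficients in ℂ[x]. If F(λ) is an n-th power in ℂ[x] for every integer λ = 1, 2, …, M (where λ is viewed as the constant polynomial λ), then either all the coefficients of F lie in ℂ (i.e. F ∈ ℂ[t]), or there exists ν ∈ ℂ[x] such that F(t) = (t + ν)^n. -/

import Mathlib

open Polynomial

noncomputable section BuchiProof




/-- max degree (in x) of the coefficients of a bivariate polynomial -/
def cdeg (p : Polynomial (Polynomial ℂ)) : ℕ :=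
  p.support.sup fun i => (p.coeff i).natDegree

lemma coeff_natDegree_le_cdeg (p : Polynomial (Polynomial ℂ)) (i : ℕ) :
    (p.coeff i).natDegree ≤ cdeg p := by
  by_cases h : i ∈ p.support
  · exact Finset.le_sup (f := fun i => (p.coeff i).natDegree) h
  · simp [Polynomial.notMem_support_iff.mp h]

lemma exists_cdeg_attained (p : Polynomial (Polynomial ℂ)) (hp : p ≠ 0) :
    ∃ i ∈ p.support, (p.coeff i).natDegree = cdeg p := by
  obtain ⟨i, hi, h⟩ := Finset.exists_mem_eq_sup p.support
    (Polynomial.nonempty_support_iff.mpr hp) (fun i => (p.coeff i).natDegree)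
  exact ⟨i, hi, h.symm⟩

/-- "top coefficient in x" polynomial: its value at c is the coefficient of x^(cdeg p)
in p evaluated at the constant c -/
def topc (p : Polynomial (Polynomial ℂ)) : Polynomial ℂ :=
  ∑ i ∈ p.support, Polynomial.C ((p.coeff i).coeff (cdeg p)) * Polynomial.X ^ i

lemma natDegree_topc_le (p : Polynomial (Polynomial ℂ)) : (topc p).natDegree ≤ p.natDegree := by
  apply Polynomial.natDegree_sum_le_of_forall_le
  intro i hi
  apply le_trans (Polynomial.natDegree_C_mul_le _ _)
  simp only [Polynomial.natDegree_X_pow]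
  exact Polynomial.le_natDegree_of_mem_supp i hi

lemma coeff_topc (p : Polynomial (Polynomial ℂ)) (i : ℕ) :
    (topc p).coeff i = (p.coeff i).coeff (cdeg p) := by
  rw [topc, Polynomial.finset_sum_coeff]
  by_cases h : i ∈ p.support
  · rw [Finset.sum_eq_single i]
    · simp
    · intro j hj hne
      have hne2 : ¬ i = j := fun e => hne e.symm
      simp [Polynomial.coeff_C_mul, Polynomial.coeff_X_pow, if_neg hne2]
    · intro hi; exact absurd h hi
  · rw [Finset.sum_eq_zero]
    · simp [Polynomial.notMem_support_iff.mp h]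
    · intro j hj
      have hne : ¬ i = j := fun e => h (e ▸ hj)
      simp [Polynomial.coeff_C_mul, Polynomial.coeff_X_pow, if_neg hne]

lemma topc_ne_zero (p : Polynomial (Polynomial ℂ)) (hp : p ≠ 0) : topc p ≠ 0 := by
  obtain ⟨i, hi, h⟩ := exists_cdeg_attained p hp
  intro hz
  have := coeff_topc p i
  rw [hz] at this
  simp only [Polynomial.coeff_zero] at this
  have hne : p.coeff i ≠ 0 := Polynomial.mem_support_iff.mp hi
  exact hne (Polynomial.leadingCoeff_eq_zero.mp (by rw [Polynomial.leadingCoeff, h]; exact this.symm))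





lemma eval_C_eq_sum (p : Polynomial (Polynomial ℂ)) (c : ℂ) :
    (p.eval (Polynomial.C c)) = ∑ i ∈ p.support, p.coeff i * Polynomial.C (c ^ i) := by
  rw [Polynomial.eval_eq_sum, Polynomial.sum]
  congr 1; ext i
  rw [← Polynomial.C_pow]

lemma coeff_eval_C (p : Polynomial (Polynomial ℂ)) (c : ℂ) (k : ℕ) :
    (p.eval (Polynomial.C c)).coeff k = ∑ i ∈ p.support, (p.coeff i).coeff k * c ^ i := by
  rw [eval_C_eq_sum, Polynomial.finset_sum_coeff]
  congr 1; ext i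
  rw [Polynomial.coeff_mul_C]





lemma natDegree_eval_C_le (p : Polynomial (Polynomial ℂ)) (c : ℂ) :
    (p.eval (Polynomial.C c)).natDegree ≤ cdeg p := by
  apply Polynomial.natDegree_le_iff_coeff_eq_zero.mpr
  intro k hk
  rw [coeff_eval_C]
  apply Finset.sum_eq_zero
  intro i hi
  have : (p.coeff i).natDegree < k :=
    lt_of_le_of_lt (Finset.le_sup (f := fun i => (p.coeff i).natDegree) hi) hk
  rw [Polynomial.coeff_eq_zero_of_natDegree_lt this, zero_mul]

noncomputable def dmap (p : Polynomial (Polynomial ℂ)) : Polynomial (Polynomial ℂ) :=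
  ∑ i ∈ p.support, Polynomial.monomial i (Polynomial.derivative (p.coeff i))

lemma coeff_dmap (p : Polynomial (Polynomial ℂ)) (k : ℕ) :
    (dmap p).coeff k = Polynomial.derivative (p.coeff k) := by
  rw [dmap, Polynomial.finset_sum_coeff]
  by_cases h : k ∈ p.support
  · rw [Finset.sum_eq_single k]
    · simp
    · intro j hj hne; simp [Polynomial.coeff_monomial, if_neg hne]
    · intro hk; exact absurd h hk
  · rw [Finset.sum_eq_zero]
    · simp [Polynomial.notMem_support_iff.mp h]
    · intro j hj
      have hne : ¬ j = k := fun e => h (e ▸ hj)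
      simp [Polynomial.coeff_monomial, if_neg hne]

lemma eval_dmap (p : Polynomial (Polynomial ℂ)) (c : ℂ) :
    (dmap p).eval (Polynomial.C c) = Polynomial.derivative (p.eval (Polynomial.C c)) := by
  rw [dmap, Polynomial.eval_finset_sum, eval_C_eq_sum, map_sum]
  congr 1; ext i
  rw [Polynomial.eval_monomial, Polynomial.derivative_mul, ← Polynomial.C_pow,
    Polynomial.derivative_C, mul_zero, add_zero]

lemma eval_eval_comm (p : Polynomial (Polynomial ℂ)) (c a : ℂ) :
    (p.eval (Polynomial.C c)).eval a = (p.map (Polynomial.evalRingHom a)).eval c := by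
  induction p using Polynomial.induction_on' with
  | add p q hp hq => simp [hp, hq]
  | monomial i g =>
    simp only [Polynomial.eval_monomial, Polynomial.map_monomial]
    rw [← Polynomial.C_pow, Polynomial.eval_mul, Polynomial.eval_C]
    simp [mul_comm]




/-- coefficient-extraction bound for products -/
lemma mul_coeff_mem_degreeLT {f g : Polynomial (Polynomial ℂ)} {d1 d2 : ℕ}
    (hf : ∀ i, f.coeff i ∈ degreeLT ℂ d1) (hg : ∀ i, (g.coeff i).natDegree ≤ d2) (j : ℕ) :
    (f * g).coeff j ∈ degreeLT ℂ (d1 + d2) := by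
  rw [Polynomial.coeff_mul]
  apply Submodule.sum_mem
  rintro ⟨a, b⟩ -
  rw [Polynomial.mem_degreeLT]
  by_cases h0 : f.coeff a * g.coeff b = 0
  · rw [h0, Polynomial.degree_zero]
    exact WithBot.bot_lt_coe _
  · have hfa : f.coeff a ≠ 0 := fun h => h0 (by rw [h, zero_mul])
    have hgb : g.coeff b ≠ 0 := fun h => h0 (by rw [h, mul_zero])
    rw [Polynomial.degree_mul, Polynomial.degree_eq_natDegree hfa,
      Polynomial.degree_eq_natDegree hgb, ← Nat.cast_add, Nat.cast_lt]
    have h1 : (f.coeff a).natDegree < d1 :=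
      (Polynomial.natDegree_lt_iff_degree_lt hfa).mpr (Polynomial.mem_degreeLT.mp (hf a))
    have h2 := hg b
    omega

variable (k m : ℕ)

/-- build a polynomial in t from a vector of x-polynomial coefficients -/
def mkP : (Fin k → ↥(degreeLT ℂ m)) →ₗ[ℂ] Polynomial (Polynomial ℂ) where
  toFun a := ∑ i : Fin k, Polynomial.C ((a i : Polynomial ℂ)) * Polynomial.X ^ (i : ℕ)
  map_add' a b := by
    rw [← Finset.sum_add_distrib]
    apply Finset.sum_congr rfl
    intro i _
    rw [Pi.add_apply, Submodule.coe_add, map_add, add_mul]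
  map_smul' c a := by
    rw [RingHom.id_apply, Finset.smul_sum]
    show (∑ i : Fin k, Polynomial.C (((c • a) i : Polynomial ℂ)) * Polynomial.X ^ (i : ℕ)) = _
    apply Finset.sum_congr rfl
    intro i _
    rw [Pi.smul_apply, SetLike.val_smul, ← Polynomial.smul_C, smul_mul_assoc]

lemma mkP_coeff (a : Fin k → ↥(degreeLT ℂ m)) (j : ℕ) :
    (mkP k m a).coeff j = if h : j < k then (a ⟨j, h⟩ : Polynomial ℂ) else 0 := by
  show (∑ i : Fin k, Polynomial.C ((a i : Polynomial ℂ)) * Polynomial.X ^ (i : ℕ)).coeff j = _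
  rw [Polynomial.finset_sum_coeff]
  have hz : ∀ i : Fin k, ¬ j = (i : ℕ) → (Polynomial.C ((a i : Polynomial ℂ)) *
      Polynomial.X ^ (i : ℕ)).coeff j = 0 := by
    intro i hne
    simp [Polynomial.coeff_C_mul, Polynomial.coeff_X_pow, if_neg hne]
  by_cases h : j < k
  · rw [Finset.sum_eq_single_of_mem (⟨j, h⟩ : Fin k) (Finset.mem_univ _), dif_pos h]
    · simp
    · intro i _ hne
      exact hz i (fun e => hne (Fin.ext e.symm))
  · rw [dif_neg h, Finset.sum_eq_zero]
    intro i _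
    exact hz i (by have := i.isLt; omega)

lemma mkP_coeff_mem (a : Fin k → ↥(degreeLT ℂ m)) (j : ℕ) :
    (mkP k m a).coeff j ∈ degreeLT ℂ m := by
  rw [mkP_coeff]
  split
  · exact (a _).2
  · exact Submodule.zero_mem _

lemma mkP_natDegree_le (a : Fin k → ↥(degreeLT ℂ m)) (hk : 1 ≤ k) :
    (mkP k m a).natDegree ≤ k - 1 := by
  apply Polynomial.natDegree_le_iff_coeff_eq_zero.mpr
  intro j hj
  rw [mkP_coeff, dif_neg (by omega)]

lemma mkP_coeff_natDegree_le (a : Fin k → ↥(degreeLT ℂ m)) (j : ℕ) :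
    ((mkP k m a).coeff j).natDegree ≤ m - 1 := by
  have h := mkP_coeff_mem k m a j
  rw [Polynomial.mem_degreeLT] at h
  by_cases h0 : (mkP k m a).coeff j = 0
  · rw [h0]; simp
  · have := (Polynomial.natDegree_lt_iff_degree_lt h0).mpr h
    omega

lemma mkP_eq_zero (a : Fin k → ↥(degreeLT ℂ m)) (h : mkP k m a = 0) : a = 0 := by
  funext i
  have h2 := mkP_coeff k m a (i : ℕ)
  rw [h, Polynomial.coeff_zero, dif_pos i.isLt] at h2
  ext : 1
  simpa using h2.symm





lemma exists_combination
    (q r : Polynomial (Polynomial ℂ)) (hq : q.Monic) (hν : 1 ≤ q.natDegree)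
    (hqp : Prime q) (hr0 : r ≠ 0) (hndvd : ¬ q ∣ r) (D : ℕ)
    (hDq : ∀ i, (q.coeff i).natDegree ≤ D) (hDr : ∀ i, (r.coeff i).natDegree ≤ D) :
    ∃ w : Polynomial ℂ, w ≠ 0 ∧
      w.natDegree ≤ (q.natDegree + r.natDegree + 2) * D ∧
      ∃ A B : Polynomial (Polynomial ℂ), A * q + B * r = Polynomial.C w := by
  set ν := q.natDegree with hνdef
  set rd := r.natDegree with hrddef
  set γ := ν + rd with hγdef
  set Dd := (γ + 1) * D + 1 with hDddef
  set Ee := Dd + D with hEedef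
  haveI hfd : ∀ m : ℕ, Module.Finite ℂ ↥(degreeLT ℂ m) :=
    fun m => Module.Finite.equiv (degreeLTEquiv ℂ m).symm
  haveI hfr : ∀ m : ℕ, Module.Free ℂ ↥(degreeLT ℂ m) := fun m => Module.Free.of_divisionRing ℂ _
  -- the bilinear combination map
  have hmem : ∀ (v : (Fin (rd + 1) → ↥(degreeLT ℂ Dd)) × (Fin ν → ↥(degreeLT ℂ Dd))) (j : ℕ),
      (mkP (rd + 1) Dd v.1 * q + mkP ν Dd v.2 * r).coeff j ∈ degreeLT ℂ Ee := by
    intro v j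
    rw [Polynomial.coeff_add]
    exact Submodule.add_mem _
      (mul_coeff_mem_degreeLT (mkP_coeff_mem _ _ v.1) hDq j)
      (mul_coeff_mem_degreeLT (mkP_coeff_mem _ _ v.2) hDr j)
  let Φ : ((Fin (rd + 1) → ↥(degreeLT ℂ Dd)) × (Fin ν → ↥(degreeLT ℂ Dd))) →ₗ[ℂ]
      (Fin γ → ↥(degreeLT ℂ Ee)) := {
    toFun := fun v k => ⟨(mkP (rd + 1) Dd v.1 * q + mkP ν Dd v.2 * r).coeff ((k : ℕ) + 1),
      hmem v ((k : ℕ) + 1)⟩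
    map_add' := by
      intro v w
      funext k
      apply Subtype.ext
      show (mkP (rd + 1) Dd (v + w).1 * q + mkP ν Dd (v + w).2 * r).coeff ((k : ℕ) + 1) =
        ((mkP (rd + 1) Dd v.1 * q + mkP ν Dd v.2 * r).coeff ((k : ℕ) + 1)) +
        ((mkP (rd + 1) Dd w.1 * q + mkP ν Dd w.2 * r).coeff ((k : ℕ) + 1))
      rw [Prod.fst_add, Prod.snd_add, map_add, map_add, add_mul, add_mul,
        add_add_add_comm, Polynomial.coeff_add]
    map_smul' := by
      intro c v
      funext k
      apply Subtype.ext
      show (mkP (rd + 1) Dd (c • v).1 * q + mkP ν Dd (c • v).2 * r).coeff ((k : ℕ) + 1) =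
        c • ((mkP (rd + 1) Dd v.1 * q + mkP ν Dd v.2 * r).coeff ((k : ℕ) + 1))
      rw [Prod.smul_fst, Prod.smul_snd, map_smul, map_smul, smul_mul_assoc, smul_mul_assoc,
        ← smul_add, Polynomial.coeff_smul] }
  have hrankV : Module.finrank ℂ
      ((Fin (rd + 1) → ↥(degreeLT ℂ Dd)) × (Fin ν → ↥(degreeLT ℂ Dd))) = (γ + 1) * Dd := by
    rw [Module.finrank_prod, Module.finrank_pi_fintype, Module.finrank_pi_fintype]
    have h1 : Module.finrank ℂ ↥(degreeLT ℂ Dd) = Dd :=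
      (LinearEquiv.finrank_eq (degreeLTEquiv ℂ Dd)).trans (Module.finrank_fin_fun ℂ)
    simp only [h1, Finset.sum_const, Finset.card_univ, Fintype.card_fin, smul_eq_mul]
    rw [hγdef]; ring
  have hrankU : Module.finrank ℂ (Fin γ → ↥(degreeLT ℂ Ee)) = γ * Ee := by
    rw [Module.finrank_pi_fintype]
    have h1 : Module.finrank ℂ ↥(degreeLT ℂ Ee) = Ee :=
      (LinearEquiv.finrank_eq (degreeLTEquiv ℂ Ee)).trans (Module.finrank_fin_fun ℂ)
    simp only [h1, Finset.sum_const, Finset.card_univ, Fintype.card_fin, smul_eq_mul]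
  have hNI : ¬ Function.Injective Φ := by
    intro hinj
    have hle := LinearMap.finrank_le_finrank_of_injective hinj
    rw [hrankV, hrankU] at hle
    have hEe : γ * Ee = γ * Dd + γ * D := by rw [hEedef]; ring
    have h2 : (γ + 1) * Dd = γ * Dd + Dd := by ring
    rw [hEe, h2] at hle
    have h3 : Dd ≤ γ * D := le_of_add_le_add_left hle
    have h4 : γ * D < Dd := by
      rw [hDddef]
      have : γ * D ≤ (γ + 1) * D := Nat.mul_le_mul_right _ (by omega)
      omega
    exact absurd h3 (not_le.mpr h4)
  obtain ⟨a, b, hab, hne⟩ := Function.not_injective_iff.mp hNI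
  set u := a - b with hudef
  have hu0 : u ≠ 0 := sub_ne_zero.mpr hne
  have hΦu : Φ u = 0 := by rw [hudef, map_sub, hab, sub_self]
  set A := mkP (rd + 1) Dd u.1 with hAdef
  set B := mkP ν Dd u.2 with hBdef
  set Sp := A * q + B * r with hSpdef
  have hS1 : ∀ k : Fin γ, Sp.coeff ((k : ℕ) + 1) = 0 := by
    intro k
    have h := congrFun hΦu k
    have h2 : Sp.coeff ((k : ℕ) + 1) = ((0 : ↥(degreeLT ℂ Ee)) : Polynomial ℂ) :=
      congrArg Subtype.val h
    rw [Submodule.coe_zero] at h2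
    exact h2
  have hSdeg : Sp.natDegree ≤ γ := by
    apply le_trans (Polynomial.natDegree_add_le _ _)
    apply max_le
    · refine le_trans (Polynomial.natDegree_mul_le) ?_
      have hA' := mkP_natDegree_le (rd + 1) Dd u.1 (by omega)
      rw [← hAdef] at hA'
      omega
    · refine le_trans (Polynomial.natDegree_mul_le) ?_
      have hB' := mkP_natDegree_le ν Dd u.2 hν
      rw [← hBdef] at hB'
      omega
  have hcoeff : ∀ j, 1 ≤ j → Sp.coeff j = 0 := by
    intro j hj
    by_cases hjγ : j ≤ γ
    · have : j = ((⟨j - 1, by omega⟩ : Fin γ) : ℕ) + 1 := by simp; omega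
      rw [this]; exact hS1 _
    · exact Polynomial.coeff_eq_zero_of_natDegree_lt (by omega)
  set w := Sp.coeff 0 with hwdef
  have hSpC : Sp = Polynomial.C w := by
    ext j
    rcases Nat.eq_zero_or_pos j with h | h
    · rw [h, Polynomial.coeff_C_zero, hwdef]
    · rw [hcoeff j h, Polynomial.coeff_C, if_neg (by omega)]
  have hw0 : w ≠ 0 := by
    intro hww
    rw [hww, map_zero] at hSpC
    have hAB : A * q + B * r = 0 := by rw [← hSpdef, hSpC]
    by_cases hB : B = 0
    · have : A * q = 0 := by rw [hB, zero_mul, add_zero] at hAB; exact hAB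
      have hA : A = 0 := by
        rcases mul_eq_zero.mp this with h | h
        · exact h
        · exact absurd h hq.ne_zero
      apply hu0
      have h1 := mkP_eq_zero _ _ _ hA
      have h2 := mkP_eq_zero _ _ _ hB
      exact Prod.ext h1 h2
    · have hdvd : q ∣ B * r := ⟨-A, by linear_combination hAB⟩
      rcases hqp.2.2 _ _ hdvd with h | h
      · have h5 := Polynomial.natDegree_le_of_dvd h hB
        have hB' := mkP_natDegree_le ν Dd u.2 hν
        rw [← hBdef] at hB'
        omega
      · exact hndvd h
  refine ⟨w, hw0, ?_, A, B, by rw [← hSpdef]; exact hSpC⟩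
  -- degree bound
  have h0 : w = A.coeff 0 * q.coeff 0 + B.coeff 0 * r.coeff 0 := by
    rw [hwdef, hSpdef, Polynomial.coeff_add, Polynomial.mul_coeff_zero,
      Polynomial.mul_coeff_zero]
  rw [h0]
  apply le_trans (Polynomial.natDegree_add_le _ _)
  have hA0 : (A.coeff 0).natDegree ≤ Dd - 1 := by
    rw [hAdef]; exact mkP_coeff_natDegree_le _ _ u.1 0
  have hB0 : (B.coeff 0).natDegree ≤ Dd - 1 := by
    rw [hBdef]; exact mkP_coeff_natDegree_le _ _ u.2 0
  have hq0 := hDq 0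
  have hr0' := hDr 0
  have hDd1 : Dd - 1 = (γ + 1) * D := by omega
  apply max_le
  · apply le_trans (Polynomial.natDegree_mul_le)
    have : (γ + 2) * D = (γ + 1) * D + D := by ring
    omega
  · apply le_trans (Polynomial.natDegree_mul_le)
    have : (γ + 2) * D = (γ + 1) * D + D := by ring
    omega




lemma rootMult_le_of_dvd {p w : Polynomial ℂ} (h : p ∣ w) (hw : w ≠ 0) (a : ℂ) :
    rootMultiplicity a p ≤ rootMultiplicity a w :=
  (Polynomial.le_rootMultiplicity_iff hw).mpr ((Polynomial.pow_rootMultiplicity_dvd p a).trans h)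

lemma natDegree_eq_sum_rootMult (g : Polynomial ℂ) (hg : g ≠ 0) (T : Finset ℂ)
    (hT : g.roots.toFinset ⊆ T) :
    g.natDegree = ∑ a ∈ T, rootMultiplicity a g := by
  have h1 : g.natDegree = Multiset.card g.roots := by
    exact (IsAlgClosed.splits g).natDegree_eq_card_roots
  rw [h1, ← Multiset.toFinset_sum_count_eq]
  rw [Finset.sum_subset hT]
  · apply Finset.sum_congr rfl
    intro a _
    rw [Polynomial.count_roots]
  · intro a _ ha
    rw [Polynomial.count_roots]
    by_contra h
    have hroot : g.IsRoot a := (Polynomial.rootMultiplicity_pos hg).mp (by omega)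
    exact ha (Multiset.mem_toFinset.mpr (Polynomial.mem_roots'.mpr ⟨hg, hroot⟩))

/-- Key counting lemma: summed over any set of integer evaluation points, the degree of
gcd(q(λ), r(λ)) is bounded independently of the number of points. -/
lemma sum_gcd_natDegree_le
    (q r : Polynomial (Polynomial ℂ)) (hq : q.Monic) (hν : 1 ≤ q.natDegree)
    (hqp : Prime q) (hr0 : r ≠ 0) (hndvd : ¬ q ∣ r) (D : ℕ)
    (hDq : ∀ i, (q.coeff i).natDegree ≤ D) (hDr : ∀ i, (r.coeff i).natDegree ≤ D)
    (Λ : Finset ℕ)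
    (hΛ : ∀ lam ∈ Λ, q.eval (Polynomial.C ((lam : ℂ))) ≠ 0) :
    ∑ lam ∈ Λ, (EuclideanDomain.gcd (q.eval (Polynomial.C ((lam : ℂ))))
        (r.eval (Polynomial.C ((lam : ℂ))))).natDegree
      ≤ q.natDegree * ((q.natDegree + r.natDegree + 2) * D) := by
  classical
  obtain ⟨w, hw0, hwdeg, A, B, hABw⟩ := exists_combination q r hq hν hqp hr0 hndvd D hDq hDr
  set g : ℕ → Polynomial ℂ := fun lam => EuclideanDomain.gcd
    (q.eval (Polynomial.C ((lam : ℂ)))) (r.eval (Polynomial.C ((lam : ℂ)))) with hgdef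
  have hgq : ∀ lam, g lam ∣ q.eval (Polynomial.C ((lam : ℂ))) :=
    fun lam => EuclideanDomain.gcd_dvd_left _ _
  have hgr : ∀ lam, g lam ∣ r.eval (Polynomial.C ((lam : ℂ))) :=
    fun lam => EuclideanDomain.gcd_dvd_right _ _
  have hg0 : ∀ lam ∈ Λ, g lam ≠ 0 := by
    intro lam hlam h
    exact hΛ lam hlam ((EuclideanDomain.gcd_eq_zero_iff.mp h).1)
  have hgw : ∀ lam, g lam ∣ w := by
    intro lam
    have h := congrArg (Polynomial.eval (Polynomial.C ((lam : ℂ)))) hABw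
    rw [Polynomial.eval_add, Polynomial.eval_mul, Polynomial.eval_mul, Polynomial.eval_C] at h
    rw [← h]
    exact dvd_add ((hgq lam).mul_left _) ((hgr lam).mul_left _)
  set T := w.roots.toFinset with hTdef
  have hsub : ∀ lam ∈ Λ, (g lam).roots.toFinset ⊆ T := by
    intro lam hlam
    intro a ha
    rw [Multiset.mem_toFinset] at *
    exact Multiset.mem_of_le (Polynomial.roots.le_of_dvd hw0 (hgw lam)) ha
  have step1 : ∑ lam ∈ Λ, (g lam).natDegree
      = ∑ a ∈ T, ∑ lam ∈ Λ, rootMultiplicity a (g lam) := by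
    rw [Finset.sum_comm]
    apply Finset.sum_congr rfl
    intro lam hlam
    exact natDegree_eq_sum_rootMult _ (hg0 lam hlam) T (hsub lam hlam)
  have step2 : ∀ a ∈ T, ∑ lam ∈ Λ, rootMultiplicity a (g lam)
      ≤ q.natDegree * rootMultiplicity a w := by
    intro a _
    set Qa := q.map (Polynomial.evalRingHom a) with hQadef
    have hQam : Qa.Monic := hq.map _
    have hQadeg : Qa.natDegree = q.natDegree := hq.natDegree_map _
    set Λa := Λ.filter (fun lam : ℕ => (q.eval (Polynomial.C ((lam : ℂ)))).IsRoot a) with hΛadef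
    have hzero : ∀ lam ∈ Λ, lam ∉ Λa → rootMultiplicity a (g lam) = 0 := by
      intro lam hlam hnot
      apply Polynomial.rootMultiplicity_eq_zero
      intro hroot
      exact hnot (Finset.mem_filter.mpr ⟨hlam, hroot.dvd (hgq lam)⟩)
    have hsum : ∑ lam ∈ Λ, rootMultiplicity a (g lam)
        = ∑ lam ∈ Λa, rootMultiplicity a (g lam) := by
      symm
      apply Finset.sum_subset (Finset.filter_subset _ _)
      intro lam hlam hnot
      exact hzero lam hlam hnot
    rw [hsum]
    have hcard : Λa.card ≤ q.natDegree := by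
      have hinj : Set.InjOn (fun lam : ℕ => (lam : ℂ)) Λa := by
        intro x _ y _ hxy
        simp only at hxy
        exact_mod_cast hxy
      have hmaps : ∀ lam ∈ Λa, ((lam : ℂ)) ∈ Qa.roots.toFinset := by
        intro lam hlam
        obtain ⟨-, hroot⟩ := Finset.mem_filter.mp hlam
        rw [Multiset.mem_toFinset]
        refine Polynomial.mem_roots'.mpr ⟨hQam.ne_zero, ?_⟩
        show Qa.eval ((lam : ℂ)) = 0
        rw [hQadef, ← eval_eval_comm]
        exact hroot
      calc Λa.card ≤ Qa.roots.toFinset.card := Finset.card_le_card_of_injOn _ hmaps hinj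
        _ ≤ Multiset.card Qa.roots := Multiset.toFinset_card_le _
        _ ≤ Qa.natDegree := Polynomial.card_roots' Qa
        _ = q.natDegree := hQadeg
    calc ∑ lam ∈ Λa, rootMultiplicity a (g lam)
        ≤ Λa.card • rootMultiplicity a w := Finset.sum_le_card_nsmul _ _ _
          (fun lam _ => rootMult_le_of_dvd (hgw lam) hw0 a)
      _ = Λa.card * rootMultiplicity a w := by rw [smul_eq_mul]
      _ ≤ q.natDegree * rootMultiplicity a w := Nat.mul_le_mul_right _ hcard
  calc ∑ lam ∈ Λ, (g lam).natDegree
      = ∑ a ∈ T, ∑ lam ∈ Λ, rootMultiplicity a (g lam) := step1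
    _ ≤ ∑ a ∈ T, q.natDegree * rootMultiplicity a w := Finset.sum_le_sum step2
    _ = q.natDegree * ∑ a ∈ T, rootMultiplicity a w := by rw [Finset.mul_sum]
    _ = q.natDegree * w.natDegree := by
        rw [← natDegree_eq_sum_rootMult w hw0 T (by rw [hTdef])]
    _ ≤ q.natDegree * ((q.natDegree + r.natDegree + 2) * D) := Nat.mul_le_mul_left _ hwdeg






lemma rm_pow (a : ℂ) (v : Polynomial ℂ) (hv : v ≠ 0) (k : ℕ) :
    rootMultiplicity a (v ^ k) = k * rootMultiplicity a v := by
  induction k with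
  | zero => simp [Polynomial.rootMultiplicity_eq_zero_iff, Polynomial.IsRoot.def]
  | succ k ih =>
    rw [pow_succ, Polynomial.rootMultiplicity_mul (mul_ne_zero (pow_ne_zero _ hv) hv), ih]
    ring

lemma sum_count_le (S : Finset ℂ) (m : Multiset ℂ) :
    ∑ a ∈ S, m.count a ≤ Multiset.card m := by
  classical
  have h1 : ∑ a ∈ S, m.count a ≤ ∑ a ∈ S ∪ m.toFinset, m.count a :=
    Finset.sum_le_sum_of_subset Finset.subset_union_left
  have h2 : ∑ a ∈ S ∪ m.toFinset, m.count a = ∑ a ∈ m.toFinset, m.count a := by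
    symm
    apply Finset.sum_subset Finset.subset_union_right
    intro a _ ha
    exact Multiset.count_eq_zero.mpr (fun h => ha (Multiset.mem_toFinset.mpr h))
  rw [h2] at h1
  rwa [Multiset.toFinset_sum_count_eq] at h1

lemma topc_eval (p : Polynomial (Polynomial ℂ)) (c : ℂ) :
    (topc p).eval c = (p.eval (Polynomial.C c)).coeff (cdeg p) := by
  rw [coeff_eval_C, topc, Polynomial.eval_finset_sum]
  apply Finset.sum_congr rfl
  intro i _
  rw [Polynomial.eval_mul, Polynomial.eval_C, Polynomial.eval_pow, Polynomial.eval_X]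

lemma monic_irred_eq_of_dvd {p q : Polynomial (Polynomial ℂ)}
    (hpm : p.Monic) (hpi : Irreducible p) (hqm : q.Monic) (hqdeg : 0 < q.natDegree)
    (hdvd : q ∣ p) : p = q := by
  obtain ⟨c, hc⟩ := hdvd
  rcases hpi.isUnit_or_isUnit hc with h | h
  · exact absurd h (Polynomial.not_isUnit_of_natDegree_pos q hqdeg)
  · obtain ⟨k, hk, hkc⟩ := Polynomial.isUnit_iff.mp h
    have hlc : p.leadingCoeff = q.leadingCoeff * c.leadingCoeff := by
      rw [hc, Polynomial.leadingCoeff_mul]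
    rw [hpm.leadingCoeff, hqm.leadingCoeff, one_mul, ← hkc] at hlc
    rw [Polynomial.leadingCoeff_C] at hlc
    rw [hc, ← hkc, ← hlc, map_one, mul_one]





set_option maxHeartbeats 1000000 in
lemma counting_contradiction
    (n : ℕ) (hn : 2 ≤ n)
    (s : Multiset (Polynomial (Polynomial ℂ)))
    (hmon : ∀ p ∈ s, p.Monic) (hirr : ∀ p ∈ s, Irreducible p)
    (hdegsum : (s.map Polynomial.natDegree).sum = n)
    (q : Polynomial (Polynomial ℂ)) (hqs : q ∈ s)
    (hδ : 1 ≤ cdeg q)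
    (hmax : ∀ p ∈ s, cdeg p ≤ cdeg q)
    (hbad : ¬ (n ∣ s.count q))
    (M : ℕ) (hM : n ^ 3 + 7 * n ^ 2 + 6 * n < M)
    (hpow : ∀ lam : ℕ, 1 ≤ lam → lam ≤ M →
      ∃ v : Polynomial ℂ, (s.prod).eval (Polynomial.C ((lam : ℂ))) = v ^ n) :
    False := by
  classical
  set δ := cdeg q with hδdef
  set ν := q.natDegree with hνdef
  set F := s.prod with hFdef
  have hqmon : q.Monic := hmon q hqs
  have hqirr : Irreducible q := hirr q hqs
  have hqprime : Prime q := hqirr.prime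
  have hdeg1 : ∀ p ∈ s, 1 ≤ p.natDegree := by
    intro p hp
    by_contra h
    have h0 : p.natDegree = 0 := by omega
    have := Polynomial.eq_one_of_monic_natDegree_zero (hmon p hp) h0
    exact not_irreducible_one (this ▸ hirr p hp)
  have hν1 : 1 ≤ ν := hdeg1 q hqs
  have hνn : ν ≤ n := by
    rw [← hdegsum]
    exact Multiset.single_le_sum (fun x _ => Nat.zero_le x) _
      (Multiset.mem_map_of_mem _ hqs)
  have hcard : Multiset.card s ≤ n := by
    rw [← hdegsum]
    have h := Multiset.card_nsmul_le_sum (s := s.map Polynomial.natDegree)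
      (fun x hx => by
        obtain ⟨p, hp, rfl⟩ := Multiset.mem_map.mp hx
        exact hdeg1 p hp)
    simpa using h
  -- the "other factors" finset
  set P := s.toFinset.erase q with hPdef
  have hPsub : ∀ p ∈ P, p ∈ s := fun p hp =>
    Multiset.mem_toFinset.mp (Finset.mem_of_mem_erase hp)
  have hPne : ∀ p ∈ P, p ≠ q := fun p hp => Finset.ne_of_mem_erase hp
  have hPcard : P.card ≤ n := by
    calc P.card ≤ s.toFinset.card := Finset.card_le_card (Finset.erase_subset _ _)
      _ ≤ Multiset.card s := Multiset.toFinset_card_le _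
      _ ≤ n := hcard
  have hPdegsum : ∑ p ∈ P, p.natDegree ≤ n := by
    rw [← hdegsum]
    rw [Finset.sum_multiset_map_count]
    calc ∑ p ∈ P, p.natDegree ≤ ∑ p ∈ s.toFinset, p.natDegree :=
          Finset.sum_le_sum_of_subset (Finset.erase_subset _ _)
      _ ≤ ∑ p ∈ s.toFinset, s.count p • p.natDegree := by
          apply Finset.sum_le_sum
          intro p hp
          have h1 : 1 ≤ s.count p := (Multiset.one_le_count_iff_mem).mpr
            (Multiset.mem_toFinset.mp hp)
          have : 1 * p.natDegree ≤ s.count p * p.natDegree := Nat.mul_le_mul_right _ h1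
          simpa using this
  -- non-dividing for other factors
  have hndvdP : ∀ p ∈ P, ¬ q ∣ p := by
    intro p hp hdvd
    exact (hPne p hp) ((monic_irred_eq_of_dvd (hmon p (hPsub p hp)) (hirr p (hPsub p hp))
      hqmon hν1 hdvd))
  -- the derivative polynomial
  set r2 := dmap q with hr2def
  have hr2coeff : ∀ k, r2.coeff k = Polynomial.derivative (q.coeff k) :=
    fun k => coeff_dmap q k
  have hr2ne : r2 ≠ 0 := by
    obtain ⟨i, hi, hattain⟩ := exists_cdeg_attained q hqmon.ne_zero
    intro h
    have h2 : Polynomial.derivative (q.coeff i) = 0 := by rw [← hr2coeff i, h]; simp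
    have h3 := Polynomial.natDegree_eq_zero_of_derivative_eq_zero h2
    omega
  have hr2deg : r2.natDegree ≤ ν - 1 := by
    apply Polynomial.natDegree_le_iff_coeff_eq_zero.mpr
    intro j hj
    rw [hr2coeff j]
    rcases Nat.lt_or_ge ν j with h | h
    · rw [Polynomial.coeff_eq_zero_of_natDegree_lt (by omega), map_zero]
    · have hj2 : j = ν := by omega
      rw [hj2]
      have : q.coeff ν = 1 := hqmon.coeff_natDegree
      rw [this]
      simp
  have hndvdr2 : ¬ q ∣ r2 := by
    intro h
    have := Polynomial.natDegree_le_of_dvd h hr2ne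
    omega
  have hr2cdeg : ∀ i, (r2.coeff i).natDegree ≤ δ := by
    intro i
    rw [hr2coeff i]
    have h1 := Polynomial.natDegree_derivative_le (q.coeff i)
    have h2 := coeff_natDegree_le_cdeg q i
    omega
  -- the good λ's
  set E := topc q with hEdef
  have hEne : E ≠ 0 := topc_ne_zero q hqmon.ne_zero
  have hEdeg : E.natDegree ≤ ν := natDegree_topc_le q
  set Λ : Finset ℕ := (Finset.Icc 1 M).filter
    (fun lam : ℕ => E.eval ((lam : ℂ)) ≠ 0 ∧ F.eval (Polynomial.C ((lam : ℂ))) ≠ 0) with hΛdef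
  -- facts for λ ∈ Λ
  have hFlam : ∀ lam ∈ Λ, F.eval (Polynomial.C ((lam : ℂ))) ≠ 0 := by
    intro lam hlam
    exact ((Finset.mem_filter.mp hlam).2).2
  have hqdvdF : q ∣ F := Multiset.dvd_prod hqs
  have hqlam : ∀ lam ∈ Λ, q.eval (Polynomial.C ((lam : ℂ))) ≠ 0 := by
    intro lam hlam h
    obtain ⟨c, hc⟩ := hqdvdF
    apply hFlam lam hlam
    rw [hc, Polynomial.eval_mul, h, zero_mul]
  have hplam : ∀ lam ∈ Λ, ∀ p ∈ s, p.eval (Polynomial.C ((lam : ℂ))) ≠ 0 := by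
    intro lam hlam p hp h
    obtain ⟨c, hc⟩ := Multiset.dvd_prod hp
    apply hFlam lam hlam
    rw [hFdef, hc, Polynomial.eval_mul, h, zero_mul]
  have hqlamdeg : ∀ lam ∈ Λ, (q.eval (Polynomial.C ((lam : ℂ)))).natDegree = δ := by
    intro lam hlam
    have h1 : (q.eval (Polynomial.C ((lam : ℂ)))).coeff δ ≠ 0 := by
      rw [← topc_eval]
      exact ((Finset.mem_filter.mp hlam).2).1
    exact le_antisymm (natDegree_eval_C_le q _) (Polynomial.le_natDegree_of_ne_zero h1)
  -- size of Λ
  have hΛcard : M ≤ Λ.card + 2 * n := by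
    have hIcc : (Finset.Icc 1 M).card = M := by simp
    set badE := (Finset.Icc 1 M).filter (fun lam : ℕ => E.eval ((lam : ℂ)) = 0) with hbadEdef
    set badF := (Finset.Icc 1 M).filter
      (fun lam : ℕ => F.eval (Polynomial.C ((lam : ℂ))) = 0) with hbadFdef
    have hsplit : (Finset.Icc 1 M) ⊆ Λ ∪ badE ∪ badF := by
      intro lam hlam
      by_cases h1 : E.eval ((lam : ℂ)) = 0
      · exact Finset.mem_union_left _ (Finset.mem_union_right _ (Finset.mem_filter.mpr ⟨hlam, h1⟩))
      · by_cases h2 : F.eval (Polynomial.C ((lam : ℂ))) = 0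
        · exact Finset.mem_union_right _ (Finset.mem_filter.mpr ⟨hlam, h2⟩)
        · exact Finset.mem_union_left _ (Finset.mem_union_left _
            (Finset.mem_filter.mpr ⟨hlam, ⟨h1, h2⟩⟩))
    have hbadEcard : badE.card ≤ n := by
      have hinj : Set.InjOn (fun lam : ℕ => (lam : ℂ)) badE := by
        intro x _ y _ h
        simp only at h
        exact_mod_cast h
      have hmaps : ∀ lam ∈ badE, ((lam : ℂ)) ∈ E.roots.toFinset := by
        intro lam hlam
        rw [Multiset.mem_toFinset]
        exact Polynomial.mem_roots'.mpr ⟨hEne, (Finset.mem_filter.mp hlam).2⟩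
      calc badE.card ≤ E.roots.toFinset.card := Finset.card_le_card_of_injOn _ hmaps hinj
        _ ≤ Multiset.card E.roots := Multiset.toFinset_card_le _
        _ ≤ E.natDegree := Polynomial.card_roots' E
        _ ≤ n := le_trans hEdeg hνn
    have hbadFcard : badF.card ≤ n := by
      have hinj : Set.InjOn
          (fun lam : ℕ => Polynomial.X - Polynomial.C (Polynomial.C ((lam : ℂ)))) badF := by
        intro x _ y _ h
        simp only at h
        have h2 := sub_right_injective h
        have h3 := Polynomial.C_injective h2
        have h4 := Polynomial.C_injective h3
        exact_mod_cast h4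
      have hmaps : ∀ lam ∈ badF,
          (Polynomial.X - Polynomial.C (Polynomial.C ((lam : ℂ)))) ∈ s.toFinset := by
        intro lam hlam
        have hF0 : F.eval (Polynomial.C ((lam : ℂ))) = 0 := (Finset.mem_filter.mp hlam).2
        have hprod : (s.map (fun p => p.eval (Polynomial.C ((lam : ℂ))))).prod = 0 := by
          have h := Multiset.prod_hom s (Polynomial.evalRingHom (Polynomial.C ((lam : ℂ))))
          simp only [Polynomial.coe_evalRingHom] at h
          rw [h]
          exact hF0
        obtain ⟨z, hz, hz0⟩ := Multiset.mem_map.mp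
          (Multiset.prod_eq_zero_iff.mp hprod)
        have hdvd : (Polynomial.X - Polynomial.C (Polynomial.C ((lam : ℂ)))) ∣ z :=
          Polynomial.dvd_iff_isRoot.mpr hz0
        have heq : z = Polynomial.X - Polynomial.C (Polynomial.C ((lam : ℂ))) :=
          monic_irred_eq_of_dvd (hmon z hz) (hirr z hz) (Polynomial.monic_X_sub_C _)
            (by rw [Polynomial.natDegree_X_sub_C]; omega) hdvd
        rw [← heq]
        exact Multiset.mem_toFinset.mpr hz
      calc badF.card ≤ s.toFinset.card := Finset.card_le_card_of_injOn _ hmaps hinj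
        _ ≤ Multiset.card s := Multiset.toFinset_card_le _
        _ ≤ n := hcard
    have h1 : M ≤ (Λ ∪ badE ∪ badF).card := by
      rw [← hIcc]
      exact Finset.card_le_card hsplit
    have h2 : (Λ ∪ badE ∪ badF).card ≤ Λ.card + badE.card + badF.card :=
      le_trans (Finset.card_union_le _ _)
        (by have := Finset.card_union_le Λ badE; omega)
    omega
  -- the partner-count function
  set Pcnt : ℕ → ℕ := fun lam => ((q.eval (Polynomial.C ((lam : ℂ)))).roots.toFinset.filter
      (fun a => ∃ p ∈ P, (p.eval (Polynomial.C ((lam : ℂ)))).IsRoot a)).card with hPcntdef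
  set Dg : ℕ → ℕ := fun lam => (EuclideanDomain.gcd (q.eval (Polynomial.C ((lam : ℂ))))
      (r2.eval (Polynomial.C ((lam : ℂ))))).natDegree with hDgdef
  -- per-λ inequality
  have hperlam : ∀ lam ∈ Λ, δ ≤ Pcnt lam + 2 * Dg lam := by
    intro lam hlam
    have hqe0 : q.eval (Polynomial.C ((lam : ℂ))) ≠ 0 := hqlam lam hlam
    have hge0 : EuclideanDomain.gcd (q.eval (Polynomial.C ((lam : ℂ))))
        (r2.eval (Polynomial.C ((lam : ℂ)))) ≠ 0 := fun h =>
      hqe0 (EuclideanDomain.gcd_eq_zero_iff.mp h).1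
    have key : ∀ a ∈ (q.eval (Polynomial.C ((lam : ℂ)))).roots.toFinset,
        rootMultiplicity a (q.eval (Polynomial.C ((lam : ℂ)))) ≤
          (if (∃ p ∈ P, (p.eval (Polynomial.C ((lam : ℂ)))).IsRoot a) then 1 else 0)
          + 2 * rootMultiplicity a (EuclideanDomain.gcd (q.eval (Polynomial.C ((lam : ℂ))))
              (r2.eval (Polynomial.C ((lam : ℂ))))) := by
      intro a ha
      have hroot : (q.eval (Polynomial.C ((lam : ℂ)))).IsRoot a :=
        (Polynomial.mem_roots'.mp (Multiset.mem_toFinset.mp ha)).2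
      have hcpos : 1 ≤ rootMultiplicity a (q.eval (Polynomial.C ((lam : ℂ)))) :=
        (Polynomial.rootMultiplicity_pos hqe0).mpr hroot
      have hgc : rootMultiplicity a (q.eval (Polynomial.C ((lam : ℂ)))) - 1 ≤
          rootMultiplicity a (EuclideanDomain.gcd (q.eval (Polynomial.C ((lam : ℂ))))
            (r2.eval (Polynomial.C ((lam : ℂ))))) := by
        rw [Polynomial.le_rootMultiplicity_iff hge0]
        apply EuclideanDomain.dvd_gcd
        · exact dvd_trans (pow_dvd_pow _ (by omega))
            (Polynomial.pow_rootMultiplicity_dvd _ a)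
        · have hr2eval : r2.eval (Polynomial.C ((lam : ℂ))) =
              Polynomial.derivative (q.eval (Polynomial.C ((lam : ℂ)))) := by
            rw [hr2def]
            exact eval_dmap q _
          rw [hr2eval]
          have hder := Polynomial.derivative_rootMultiplicity_of_root hroot
          rw [← hder]
          exact Polynomial.pow_rootMultiplicity_dvd _ _
      by_cases hpart : ∃ p ∈ P, (p.eval (Polynomial.C ((lam : ℂ)))).IsRoot a
      · rw [if_pos hpart]
        omega
      · rw [if_neg hpart]
        have hmem1 : 1 ≤ lam := (Finset.mem_Icc.mp (Finset.mem_of_mem_filter lam hlam)).1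
        have hmem2 : lam ≤ M := (Finset.mem_Icc.mp (Finset.mem_of_mem_filter lam hlam)).2
        obtain ⟨v, hv⟩ := hpow lam hmem1 hmem2
        have hFne : F.eval (Polynomial.C ((lam : ℂ))) ≠ 0 := hFlam lam hlam
        have hv0 : v ≠ 0 := by
          intro h
          rw [h, zero_pow (by omega)] at hv
          exact hFne hv
        have hrmF : rootMultiplicity a (F.eval (Polynomial.C ((lam : ℂ))))
            = (s.count q) * rootMultiplicity a (q.eval (Polynomial.C ((lam : ℂ)))) := by
          have hFe : F.eval (Polynomial.C ((lam : ℂ)))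
              = (s.map (fun p => p.eval (Polynomial.C ((lam : ℂ))))).prod := by
            rw [hFdef]
            exact (Multiset.prod_hom s (Polynomial.evalRingHom (Polynomial.C ((lam : ℂ))))).symm
          have h0notin : (0 : Polynomial ℂ) ∉
              s.map (fun p => p.eval (Polynomial.C ((lam : ℂ)))) := by
            intro h
            obtain ⟨z, hz, hz0⟩ := Multiset.mem_map.mp h
            exact hplam lam hlam z hz hz0
          rw [← Polynomial.count_roots, hFe, Polynomial.roots_multiset_prod _ h0notin,
            Multiset.count_bind, Multiset.map_map, Finset.sum_multiset_map_count]
          rw [Finset.sum_eq_single q]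
          · rw [Function.comp_apply, Polynomial.count_roots, smul_eq_mul]
          · intro p hp hne
            have hpP : p ∈ P := Finset.mem_erase.mpr ⟨hne, hp⟩
            have : Multiset.count a (p.eval (Polynomial.C ((lam : ℂ)))).roots = 0 := by
              rw [Polynomial.count_roots]
              apply Polynomial.rootMultiplicity_eq_zero
              intro hroot2
              exact hpart ⟨p, hpP, hroot2⟩
            rw [Function.comp_apply, this, smul_zero]
          · intro h
            exact absurd (Multiset.mem_toFinset.mpr hqs) h
        have hdvd : n ∣ (s.count q) * rootMultiplicity a (q.eval (Polynomial.C ((lam : ℂ)))) := by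
          rw [← hrmF, hv, rm_pow a v hv0 n]
          exact Dvd.intro _ rfl
        have hc1 : rootMultiplicity a (q.eval (Polynomial.C ((lam : ℂ)))) ≠ 1 := by
          intro h
          rw [h, mul_one] at hdvd
          exact hbad hdvd
        omega
    -- now sum the per-root inequality
    have hrsum : δ = ∑ a ∈ (q.eval (Polynomial.C ((lam : ℂ)))).roots.toFinset,
        rootMultiplicity a (q.eval (Polynomial.C ((lam : ℂ)))) := by
      rw [← hqlamdeg lam hlam]
      exact natDegree_eq_sum_rootMult _ hqe0 _ (subset_refl _)
    rw [hrsum]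
    calc ∑ a ∈ (q.eval (Polynomial.C ((lam : ℂ)))).roots.toFinset,
          rootMultiplicity a (q.eval (Polynomial.C ((lam : ℂ))))
        ≤ ∑ a ∈ (q.eval (Polynomial.C ((lam : ℂ)))).roots.toFinset,
          ((if (∃ p ∈ P, (p.eval (Polynomial.C ((lam : ℂ)))).IsRoot a) then 1 else 0)
          + 2 * rootMultiplicity a (EuclideanDomain.gcd (q.eval (Polynomial.C ((lam : ℂ))))
              (r2.eval (Polynomial.C ((lam : ℂ)))))) := Finset.sum_le_sum key
      _ = Pcnt lam + ∑ a ∈ (q.eval (Polynomial.C ((lam : ℂ)))).roots.toFinset,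
          2 * rootMultiplicity a (EuclideanDomain.gcd (q.eval (Polynomial.C ((lam : ℂ))))
              (r2.eval (Polynomial.C ((lam : ℂ))))) := by
          simp only [hPcntdef]
          rw [Finset.sum_add_distrib, Finset.card_filter]
      _ ≤ Pcnt lam + 2 * Dg lam := by
          rw [← Finset.mul_sum]
          have hb : ∑ a ∈ (q.eval (Polynomial.C ((lam : ℂ)))).roots.toFinset,
              rootMultiplicity a (EuclideanDomain.gcd (q.eval (Polynomial.C ((lam : ℂ))))
                (r2.eval (Polynomial.C ((lam : ℂ))))) ≤ Dg lam := by
            have h1 : ∀ a, rootMultiplicity a (EuclideanDomain.gcd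
                (q.eval (Polynomial.C ((lam : ℂ)))) (r2.eval (Polynomial.C ((lam : ℂ)))))
                = Multiset.count a (EuclideanDomain.gcd (q.eval (Polynomial.C ((lam : ℂ))))
                  (r2.eval (Polynomial.C ((lam : ℂ))))).roots :=
              fun a => (Polynomial.count_roots _).symm
            calc ∑ a ∈ (q.eval (Polynomial.C ((lam : ℂ)))).roots.toFinset,
                rootMultiplicity a (EuclideanDomain.gcd (q.eval (Polynomial.C ((lam : ℂ))))
                  (r2.eval (Polynomial.C ((lam : ℂ)))))
                = ∑ a ∈ (q.eval (Polynomial.C ((lam : ℂ)))).roots.toFinset,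
                  Multiset.count a (EuclideanDomain.gcd (q.eval (Polynomial.C ((lam : ℂ))))
                    (r2.eval (Polynomial.C ((lam : ℂ))))).roots :=
                  Finset.sum_congr rfl (fun a _ => h1 a)
              _ ≤ Multiset.card (EuclideanDomain.gcd (q.eval (Polynomial.C ((lam : ℂ))))
                  (r2.eval (Polynomial.C ((lam : ℂ))))).roots := sum_count_le _ _
              _ ≤ Dg lam := Polynomial.card_roots' _
          omega
  -- summation over Λ
  have hsum0 : Λ.card * δ ≤ (∑ lam ∈ Λ, Pcnt lam) + 2 * (∑ lam ∈ Λ, Dg lam) := by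
    have h := Finset.sum_le_sum hperlam
    rw [Finset.sum_const, smul_eq_mul] at h
    calc Λ.card * δ ≤ ∑ lam ∈ Λ, (Pcnt lam + 2 * Dg lam) := h
      _ = (∑ lam ∈ Λ, Pcnt lam) + ∑ lam ∈ Λ, 2 * Dg lam := Finset.sum_add_distrib
      _ = (∑ lam ∈ Λ, Pcnt lam) + 2 * (∑ lam ∈ Λ, Dg lam) := by rw [Finset.mul_sum]
  have hderivsum : ∑ lam ∈ Λ, Dg lam ≤ ν * ((ν + r2.natDegree + 2) * δ) := by
    simp only [hDgdef]
    exact sum_gcd_natDegree_le q r2 hqmon hν1 hqprime hr2ne hndvdr2 δ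
      (fun i => coeff_natDegree_le_cdeg q i) hr2cdeg Λ hqlam
  have hpartnersum : ∑ lam ∈ Λ, Pcnt lam ≤ ∑ p ∈ P, (ν * ((ν + p.natDegree + 2) * δ)) := by
    have hper : ∀ lam ∈ Λ, Pcnt lam ≤ ∑ p ∈ P, (EuclideanDomain.gcd
        (q.eval (Polynomial.C ((lam : ℂ)))) (p.eval (Polynomial.C ((lam : ℂ))))).natDegree := by
      intro lam hlam
      simp only [hPcntdef]
      have hqe0 := hqlam lam hlam
      have hsub2 : ((q.eval (Polynomial.C ((lam : ℂ)))).roots.toFinset.filter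
          (fun a => ∃ p ∈ P, (p.eval (Polynomial.C ((lam : ℂ)))).IsRoot a))
          ⊆ P.biUnion (fun p => (EuclideanDomain.gcd (q.eval (Polynomial.C ((lam : ℂ))))
            (p.eval (Polynomial.C ((lam : ℂ))))).roots.toFinset) := by
        intro a ha
        obtain ⟨hroots, p, hpP, hproot⟩ := Finset.mem_filter.mp ha
        apply Finset.mem_biUnion.mpr
        refine ⟨p, hpP, ?_⟩
        rw [Multiset.mem_toFinset]
        have hg0 : EuclideanDomain.gcd (q.eval (Polynomial.C ((lam : ℂ))))
            (p.eval (Polynomial.C ((lam : ℂ)))) ≠ 0 := fun h =>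
          hqe0 (EuclideanDomain.gcd_eq_zero_iff.mp h).1
        refine Polynomial.mem_roots'.mpr ⟨hg0, ?_⟩
        have hqroot : (q.eval (Polynomial.C ((lam : ℂ)))).IsRoot a :=
          (Polynomial.mem_roots'.mp (Multiset.mem_toFinset.mp hroots)).2
        have hdvd := EuclideanDomain.dvd_gcd (Polynomial.dvd_iff_isRoot.mpr hqroot)
          (Polynomial.dvd_iff_isRoot.mpr hproot)
        exact Polynomial.dvd_iff_isRoot.mp hdvd
      calc ((q.eval (Polynomial.C ((lam : ℂ)))).roots.toFinset.filter
          (fun a => ∃ p ∈ P, (p.eval (Polynomial.C ((lam : ℂ)))).IsRoot a)).card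
          ≤ (P.biUnion (fun p => (EuclideanDomain.gcd (q.eval (Polynomial.C ((lam : ℂ))))
            (p.eval (Polynomial.C ((lam : ℂ))))).roots.toFinset)).card :=
            Finset.card_le_card hsub2
        _ ≤ ∑ p ∈ P, (EuclideanDomain.gcd (q.eval (Polynomial.C ((lam : ℂ))))
            (p.eval (Polynomial.C ((lam : ℂ))))).roots.toFinset.card :=
            Finset.card_biUnion_le
        _ ≤ ∑ p ∈ P, (EuclideanDomain.gcd (q.eval (Polynomial.C ((lam : ℂ))))
            (p.eval (Polynomial.C ((lam : ℂ))))).natDegree :=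
            Finset.sum_le_sum (fun p _ => le_trans (Multiset.toFinset_card_le _)
              (Polynomial.card_roots' _))
    calc ∑ lam ∈ Λ, Pcnt lam
        ≤ ∑ lam ∈ Λ, ∑ p ∈ P, (EuclideanDomain.gcd (q.eval (Polynomial.C ((lam : ℂ))))
          (p.eval (Polynomial.C ((lam : ℂ))))).natDegree := Finset.sum_le_sum hper
      _ = ∑ p ∈ P, ∑ lam ∈ Λ, (EuclideanDomain.gcd (q.eval (Polynomial.C ((lam : ℂ))))
          (p.eval (Polynomial.C ((lam : ℂ))))).natDegree := Finset.sum_comm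
      _ ≤ ∑ p ∈ P, (ν * ((ν + p.natDegree + 2) * δ)) := Finset.sum_le_sum (fun p hp =>
          sum_gcd_natDegree_le q p hqmon hν1 hqprime (hmon p (hPsub p hp)).ne_zero
            (hndvdP p hp) δ (fun i => coeff_natDegree_le_cdeg q i)
            (fun i => le_trans (coeff_natDegree_le_cdeg p i) (hmax p (hPsub p hp))) Λ hqlam)
  -- numerics
  have hnum1 : ∑ p ∈ P, ν * ((ν + p.natDegree + 2) * δ) ≤ (n^3 + 3*n^2) * δ := by
    have hsplit2 : ∑ p ∈ P, (ν + p.natDegree + 2) ≤ n^2 + 3*n := by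
      have heq : ∀ p ∈ P, ν + p.natDegree + 2 = (ν + 2) + p.natDegree := fun p _ => by ring
      rw [Finset.sum_congr rfl heq, Finset.sum_add_distrib, Finset.sum_const, smul_eq_mul]
      have h1 : P.card * (ν + 2) ≤ n * (n + 2) := Nat.mul_le_mul hPcard (by omega)
      have h2 := hPdegsum
      have h3 : n * (n + 2) + n = n^2 + 3*n := by ring
      omega
    calc ∑ p ∈ P, ν * ((ν + p.natDegree + 2) * δ)
        = ν * δ * ∑ p ∈ P, (ν + p.natDegree + 2) := by
          rw [Finset.mul_sum]
          apply Finset.sum_congr rfl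
          intro p _
          ring
      _ ≤ n * δ * (n^2 + 3*n) := Nat.mul_le_mul (Nat.mul_le_mul_right _ hνn) hsplit2
      _ = (n^3 + 3*n^2) * δ := by ring
  have hnum2 : ν * ((ν + r2.natDegree + 2) * δ) ≤ (2*n^2 + n) * δ := by
    have h1 : ν + r2.natDegree + 2 ≤ 2*n + 1 := by omega
    calc ν * ((ν + r2.natDegree + 2) * δ) ≤ n * ((2*n+1) * δ) :=
        Nat.mul_le_mul hνn (Nat.mul_le_mul_right _ h1)
      _ = (2*n^2 + n) * δ := by ring
  have hfinal : Λ.card * δ ≤ (n^3 + 7*n^2 + 2*n) * δ := by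
    calc Λ.card * δ ≤ (∑ lam ∈ Λ, Pcnt lam) + 2 * (∑ lam ∈ Λ, Dg lam) := hsum0
      _ ≤ (n^3+3*n^2)*δ + 2*((2*n^2+n)*δ) := Nat.add_le_add
          (le_trans hpartnersum hnum1)
          (Nat.mul_le_mul_left _ (le_trans hderivsum hnum2))
      _ = (n^3 + 7*n^2 + 2*n) * δ := by ring
  have hΛle : Λ.card ≤ n^3 + 7*n^2 + 2*n :=
    Nat.le_of_mul_le_mul_right hfinal (by omega)
  omega








lemma monic_factorization (F : Polynomial (Polynomial ℂ)) (h : F.Monic) :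
    ∃ s : Multiset (Polynomial (Polynomial ℂ)),
      (∀ p ∈ s, p.Monic) ∧ (∀ p ∈ s, Irreducible p) ∧ F = s.prod := by
  classical
  generalize hd : F.natDegree = d
  induction d using Nat.strong_induction_on generalizing F with
  | _ d ih =>
    rcases Nat.eq_zero_or_pos d with h0 | hpos
    · refine ⟨0, by simp, by simp, ?_⟩
      rw [Multiset.prod_zero]
      exact Polynomial.eq_one_of_monic_natDegree_zero h (hd ▸ h0)
    · have hF0 : F ≠ 0 := h.ne_zero
      have hnotunit : ¬ IsUnit F :=
        Polynomial.not_isUnit_of_natDegree_pos F (hd ▸ hpos)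
      by_cases hirr : Irreducible F
      · exact ⟨{F}, by simpa using h, by simpa using hirr, by simp⟩
      · rw [irreducible_iff] at hirr
        push_neg at hirr
        obtain ⟨a, b, hab, hau, hbu⟩ := hirr hnotunit
        have ha0 : a ≠ 0 := fun hz => hF0 (by rw [hab, hz, zero_mul])
        have hb0 : b ≠ 0 := fun hz => hF0 (by rw [hab, hz, mul_zero])
        have hlc : a.leadingCoeff * b.leadingCoeff = 1 := by
          have := Polynomial.leadingCoeff_mul a b
          rw [← hab, h.leadingCoeff] at this
          exact this.symm
        have hula : IsUnit a.leadingCoeff := IsUnit.of_mul_eq_one _ hlc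
        obtain ⟨ua, hua⟩ := hula
        -- normalize
        set a' := Polynomial.C ((ua⁻¹ : (Polynomial ℂ)ˣ) : Polynomial ℂ) * a with ha'def
        set b' := Polynomial.C ((ua : (Polynomial ℂ)ˣ) : Polynomial ℂ) * b with hb'def
        have hCa : (Polynomial.C ((ua⁻¹ : (Polynomial ℂ)ˣ) : Polynomial ℂ)) *
            (Polynomial.C ((ua : (Polynomial ℂ)ˣ) : Polynomial ℂ)) = 1 := by
          rw [← map_mul, Units.inv_mul, map_one]
        have hab' : F = a' * b' := by
          rw [ha'def, hb'def]
          calc F = a * b := hab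
            _ = (Polynomial.C ((ua⁻¹ : (Polynomial ℂ)ˣ) : Polynomial ℂ) *
                Polynomial.C ((ua : (Polynomial ℂ)ˣ) : Polynomial ℂ)) * (a * b) := by
                rw [hCa, one_mul]
            _ = _ := by ring
        have ha'm : a'.Monic := by
          have : a'.leadingCoeff = ((ua⁻¹ : (Polynomial ℂ)ˣ) : Polynomial ℂ) * a.leadingCoeff := by
            rw [ha'def, Polynomial.leadingCoeff_mul, Polynomial.leadingCoeff_C]
          rw [Polynomial.Monic, this, ← hua, Units.inv_mul]
        have hb'm : b'.Monic := by
          have hlcb : a.leadingCoeff * b.leadingCoeff = 1 := hlc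
          have : b'.leadingCoeff = ((ua : (Polynomial ℂ)ˣ) : Polynomial ℂ) * b.leadingCoeff := by
            rw [hb'def, Polynomial.leadingCoeff_mul, Polynomial.leadingCoeff_C]
          rw [Polynomial.Monic, this, hua]
          -- a.leadingCoeff * b.leadingCoeff = 1
          exact hlcb
        have ha'0 : a' ≠ 0 := ha'm.ne_zero
        have hb'0 : b' ≠ 0 := hb'm.ne_zero
        have hdeg : a'.natDegree + b'.natDegree = d := by
          rw [← hd, hab', Polynomial.natDegree_mul ha'0 hb'0]
        have ha'pos : 0 < a'.natDegree := by
          by_contra hz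
          have h0' : a'.natDegree = 0 := by omega
          have := Polynomial.eq_one_of_monic_natDegree_zero ha'm h0'
          apply hau
          have : a = Polynomial.C ((ua : (Polynomial ℂ)ˣ) : Polynomial ℂ) * a' := by
            rw [ha'def]
            calc a = (Polynomial.C ((ua : (Polynomial ℂ)ˣ) : Polynomial ℂ) *
                Polynomial.C ((ua⁻¹ : (Polynomial ℂ)ˣ) : Polynomial ℂ)) * a := by
                  rw [← map_mul, Units.mul_inv, map_one, one_mul]
              _ = _ := by ring
          rw [this, ‹a' = 1›, mul_one]
          exact (Polynomial.isUnit_C).mpr ua.isUnit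
        have hb'pos : 0 < b'.natDegree := by
          by_contra hz
          have h0' : b'.natDegree = 0 := by omega
          have hb'1 := Polynomial.eq_one_of_monic_natDegree_zero hb'm h0'
          apply hbu
          have : b = Polynomial.C ((ua⁻¹ : (Polynomial ℂ)ˣ) : Polynomial ℂ) * b' := by
            rw [hb'def]
            calc b = (Polynomial.C ((ua⁻¹ : (Polynomial ℂ)ˣ) : Polynomial ℂ) *
                Polynomial.C ((ua : (Polynomial ℂ)ˣ) : Polynomial ℂ)) * b := by
                  rw [hCa, one_mul]
              _ = _ := by ring
          rw [this, hb'1, mul_one]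
          exact (Polynomial.isUnit_C).mpr ua⁻¹.isUnit
        obtain ⟨sa, hsa1, hsa2, hsa3⟩ := ih a'.natDegree (by omega) a' ha'm rfl
        obtain ⟨sb, hsb1, hsb2, hsb3⟩ := ih b'.natDegree (by omega) b' hb'm rfl
        refine ⟨sa + sb, ?_, ?_, ?_⟩
        · intro p hp
          rcases Multiset.mem_add.mp hp with h' | h'
          · exact hsa1 p h'
          · exact hsb1 p h'
        · intro p hp
          rcases Multiset.mem_add.mp hp with h' | h'
          · exact hsa2 p h'
          · exact hsb2 p h'
        · rw [Multiset.prod_add, ← hsa3, ← hsb3, hab']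





lemma cdeg_zero_mapC (p : Polynomial (Polynomial ℂ)) (h : cdeg p = 0) :
    ∃ P0 : Polynomial ℂ, p = P0.map (Polynomial.C) := by
  refine ⟨p.map (Polynomial.evalRingHom 0), ?_⟩
  ext i : 1
  rw [Polynomial.coeff_map, Polynomial.coeff_map]
  have hdeg : (p.coeff i).natDegree ≤ 0 := h ▸ coeff_natDegree_le_cdeg p i
  have := Polynomial.eq_C_of_natDegree_le_zero hdeg
  rw [this]
  simp

lemma left_case (s : Multiset (Polynomial (Polynomial ℂ))) (hconst : ∀ p ∈ s, cdeg p = 0) :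
    ∀ i, ∃ c : ℂ, (s.prod).coeff i = Polynomial.C c := by
  have hmem : s.prod ∈ (Polynomial.mapRingHom (Polynomial.C : ℂ →+* Polynomial ℂ)).range := by
    apply Subring.multiset_prod_mem
    intro p hp
    obtain ⟨P0, hP0⟩ := cdeg_zero_mapC p (hconst p hp)
    exact ⟨P0, hP0.symm⟩
  obtain ⟨P, hP⟩ := hmem
  intro i
  refine ⟨P.coeff i, ?_⟩
  rw [← hP]
  show (P.map (Polynomial.C : ℂ →+* Polynomial ℂ)).coeff i = _
  rw [Polynomial.coeff_map]

lemma right_case (n : ℕ) (hn : 2 ≤ n) (F : Polynomial (Polynomial ℂ))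
    (hmonic : F.Monic) (hdeg : F.natDegree = n)
    (s : Multiset (Polynomial (Polynomial ℂ)))
    (hmon : ∀ p ∈ s, p.Monic) (hirr : ∀ p ∈ s, Irreducible p) (hFs : F = s.prod)
    (p : Polynomial (Polynomial ℂ)) (hps : p ∈ s) (hdvdn : n ∣ s.count p) :
    ∃ w : Polynomial ℂ, F = (Polynomial.X + Polynomial.C w) ^ n := by
  classical
  have hpm : p.Monic := hmon p hps
  have hdp1 : 1 ≤ p.natDegree := by
    by_contra hz
    have h0 : p.natDegree = 0 := by omega
    have := Polynomial.eq_one_of_monic_natDegree_zero hpm h0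
    exact not_irreducible_one (this ▸ hirr p hps)
  have hm1 : 1 ≤ s.count p := Multiset.one_le_count_iff_mem.mpr hps
  have hnm : n ≤ s.count p := Nat.le_of_dvd (by omega) hdvdn
  have hrep : Multiset.replicate (s.count p) p ≤ s := Multiset.le_iff_count.mpr (by
    intro a
    rw [Multiset.count_replicate]
    split
    · rename_i h
      subst h
      exact le_refl _
    · exact Nat.zero_le _)
  have hdvd : p ^ (s.count p) ∣ F := by
    rw [hFs, ← Multiset.prod_replicate]
    exact Multiset.prod_dvd_prod_of_le hrep
  have hF0 : F ≠ 0 := hmonic.ne_zero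
  have hdegle : s.count p * p.natDegree ≤ n := by
    have := Polynomial.natDegree_le_of_dvd hdvd hF0
    rwa [Polynomial.natDegree_pow, hdeg] at this
  have hle1 : s.count p ≤ s.count p * p.natDegree :=
    Nat.le_mul_of_pos_right _ (by omega)
  have hmn : s.count p = n := by omega
  have hdp : p.natDegree = 1 := by
    rw [hmn] at hdegle
    have : n * p.natDegree ≤ n * 1 := by omega
    have h2 := Nat.le_of_mul_le_mul_left this (by omega : 0 < n)
    omega
  rw [hmn] at hdvd
  obtain ⟨g, hg⟩ := hdvd
  have hp0 : p ^ n ≠ 0 := pow_ne_zero _ hpm.ne_zero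
  have hg0 : g ≠ 0 := fun hz => hF0 (by rw [hg, hz, mul_zero])
  have hgdeg : g.natDegree = 0 := by
    have := Polynomial.natDegree_mul hp0 hg0
    rw [← hg, hdeg, Polynomial.natDegree_pow, hdp, mul_one] at this
    omega
  have hglc : g.leadingCoeff = 1 := by
    have h1 : F.leadingCoeff = (p ^ n).leadingCoeff * g.leadingCoeff := by
      rw [hg, Polynomial.leadingCoeff_mul]
    rw [hmonic.leadingCoeff, Polynomial.leadingCoeff_pow, hpm.leadingCoeff, one_pow,
      one_mul] at h1
    exact h1.symm
  have hg1 : g = 1 := by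
    have := Polynomial.eq_C_of_natDegree_le_zero (le_of_eq hgdeg)
    rw [this]
    rw [Polynomial.leadingCoeff, hgdeg] at hglc
    rw [hglc, map_one]
  have hFpn : F = p ^ n := by rw [hg, hg1, mul_one]
  refine ⟨p.coeff 0, ?_⟩
  rw [hFpn]
  conv_lhs => rw [hpm.eq_X_add_C hdp]

lemma choose_bound (n : ℕ) (hn : 2 ≤ n) :
    n ^ 3 + 7 * n ^ 2 + 6 * n < 2 * n ^ 2 * (n + 1) * Nat.choose (3 * n - 1) n := by
  have h10 : 10 ≤ Nat.choose (3 * n - 1) n := by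
    have h1 : Nat.choose (n + 3) n ≤ Nat.choose (3 * n - 1) n :=
      Nat.choose_le_choose n (by omega)
    have h2 : Nat.choose (n + 3) n = Nat.choose (n + 3) 3 := by
      have := Nat.choose_symm (n := n + 3) (k := 3) (by omega)
      simpa using this
    have h3 : Nat.choose 5 3 ≤ Nat.choose (n + 3) 3 := Nat.choose_le_choose 3 (by omega)
    have h4 : Nat.choose 5 3 = 10 := by decide
    omega
  calc n ^ 3 + 7 * n ^ 2 + 6 * n < 2 * n ^ 2 * (n + 1) * 10 := by nlinarith
    _ ≤ 2 * n ^ 2 * (n + 1) * Nat.choose (3 * n - 1) n := Nat.mul_le_mul_left _ h10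



theorem buchi_problem_monic_polynomial_complex
    (n : ℕ) (hn : 2 ≤ n)
    (F : Polynomial (Polynomial ℂ))
    (hmonic : F.Monic) (hdeg : F.natDegree = n)
    (hpow : ∀ lam : ℕ, 1 ≤ lam → lam ≤ 2 * n ^ 2 * (n + 1) * Nat.choose (3 * n - 1) n →
      ∃ v : Polynomial ℂ, F.eval ((lam : Polynomial ℂ)) = v ^ n) :
    (∀ i, ∃ c : ℂ, F.coeff i = C c) ∨
    ∃ ν : Polynomial ℂ, F = (X + C ν) ^ n := by
  classical
  set M := 2 * n ^ 2 * (n + 1) * Nat.choose (3 * n - 1) n with hMdef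
  obtain ⟨s, hmon, hirr, hFs⟩ := monic_factorization F hmonic
  have hs0 : (0 : Polynomial (Polynomial ℂ)) ∉ s := fun h => (hmon 0 h).ne_zero rfl
  have hdegsum : (s.map Polynomial.natDegree).sum = n := by
    rw [← hdeg, hFs, Polynomial.natDegree_multiset_prod s hs0]
  have hpow' : ∀ lam : ℕ, 1 ≤ lam → lam ≤ M →
      ∃ v : Polynomial ℂ, (s.prod).eval (Polynomial.C ((lam : ℂ))) = v ^ n := by
    intro lam h1 h2
    obtain ⟨v, hv⟩ := hpow lam h1 h2
    refine ⟨v, ?_⟩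
    rw [← hFs]
    have hcast : ((lam : Polynomial ℂ)) = Polynomial.C ((lam : ℂ)) := by
      rw [map_natCast (Polynomial.C : ℂ →+* Polynomial ℂ) lam]
    rw [← hcast]
    exact hv
  by_cases hconst : ∀ p ∈ s, cdeg p = 0
  · left
    rw [hFs]
    exact left_case s hconst
  · push_neg at hconst
    obtain ⟨p0, hp0s, hp0⟩ := hconst
    by_cases hgood : ∃ p ∈ s, 1 ≤ cdeg p ∧ n ∣ s.count p
    · right
      obtain ⟨p, hps, _, hdvdn⟩ := hgood
      exact right_case n hn F hmonic hdeg s hmon hirr hFs p hps hdvdn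
    · exfalso
      push_neg at hgood
      obtain ⟨q, hqs', hqmax⟩ := Finset.exists_max_image s.toFinset cdeg
        ⟨p0, Multiset.mem_toFinset.mpr hp0s⟩
      have hqs : q ∈ s := Multiset.mem_toFinset.mp hqs'
      have hq1 : 1 ≤ cdeg q :=
        le_trans (by omega) (hqmax p0 (Multiset.mem_toFinset.mpr hp0s))
      exact counting_contradiction n hn s hmon hirr hdegsum q hqs hq1
        (fun p hp => hqmax p (Multiset.mem_toFinset.mpr hp))
        (hgood q hqs hq1) M (choose_bound n hn) hpow'

end BuchiProof
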